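/- Let G be a finite simple graph and suppose α_k(G) = ((k−1)/k)·(n − ω(G)) where n = |V(G)|. If x lies on a cycle of G, then α_k(G − x) = α_k(G), ω(G − x) = ω(G) − 1, and G − x also satisfies α_k(G − x) = ((k−1)/k)·(|V(G−x)| − ω(G − x)). -/

import Mathlib

open SimpleGraph

/-- A set `S` is a generalized `k`-independent set in `G` if the induced subgraph `G[S]`
contains no tree on `k` vertices, equivalently every connected component of `G[S]`
has at most `k - 1` vertices. -/
def IsGenKIndep {V : Type*} (G : SimpleGraph V) (k : ℕ) (S : Set V) : Prop :=
  ∀ c : (G.induce S).ConnectedComponent, Nat.card c.supp ≤ k - 1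

/-- The generalized `k`-independence number: the maximum size of a generalized
`k`-independent set. -/
noncomputable def alphaK {V : Type*} (G : SimpleGraph V) (k : ℕ) : ℕ :=
  sSup {m | ∃ S : Set V, IsGenKIndep G k S ∧ S.ncard = m}

/-- The dimension of the cycle space: `|E| - |V| + c(G)` (as a natural number;
note `|E| + c(G) ≥ |V|` always holds). -/
noncomputable def cycleDim {V : Type*} (G : SimpleGraph V) : ℕ :=
  Nat.card G.edgeSet + Nat.card G.ConnectedComponent - Nat.card V

/-- `x` lies on a cycle of `G`. -/
def OnCycle {V : Type*} (G : SimpleGraph V) (x : V) : Prop :=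
  ∃ (u : V) (w : G.Walk u u), w.IsCycle ∧ x ∈ w.support

section Helpers

variable {V W : Type*}

lemma isGenKIndep_empty (G : SimpleGraph V) (k : ℕ) : IsGenKIndep G k (∅ : Set V) := by
  intro c
  exact c.ind (fun v => (Set.notMem_empty _ v.2).elim)

lemma alphaK_bddAbove [Finite V] (G : SimpleGraph V) (k : ℕ) :
    BddAbove {m | ∃ S : Set V, IsGenKIndep G k S ∧ S.ncard = m} := by
  refine ⟨Nat.card V, fun m hm => ?_⟩
  obtain ⟨S, _, rfl⟩ := hm
  have := Set.ncard_le_ncard (Set.subset_univ S) Set.finite_univ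
  simpa [Set.ncard_univ] using this

lemma ncard_le_alphaK [Finite V] {G : SimpleGraph V} {k : ℕ} {S : Set V}
    (h : IsGenKIndep G k S) : S.ncard ≤ alphaK G k :=
  le_csSup (alphaK_bddAbove G k) ⟨S, h, rfl⟩

lemma exists_alphaK [Finite V] (G : SimpleGraph V) (k : ℕ) :
    ∃ S : Set V, IsGenKIndep G k S ∧ S.ncard = alphaK G k := by
  have hne : {m | ∃ S : Set V, IsGenKIndep G k S ∧ S.ncard = m}.Nonempty :=
    ⟨0, ∅, isGenKIndep_empty G k, by simp⟩
  have := Nat.sSup_mem hne (alphaK_bddAbove G k)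
  exact this

lemma card_supp_le_nat_card [Finite W] (H : SimpleGraph W) (c : H.ConnectedComponent) :
    Nat.card c.supp ≤ Nat.card W := by
  rw [Nat.card_coe_set_eq]
  calc c.supp.ncard ≤ (Set.univ : Set W).ncard :=
        Set.ncard_le_ncard (Set.subset_univ _) Set.finite_univ
    _ = Nat.card W := Set.ncard_univ W

lemma isGenKIndep_of_ncard_le [Finite V] {G : SimpleGraph V} {k : ℕ} {B : Set V}
    (h : B.ncard ≤ k - 1) : IsGenKIndep G k B := by
  intro c
  calc Nat.card c.supp ≤ Nat.card B := card_supp_le_nat_card _ c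
    _ = B.ncard := Nat.card_coe_set_eq B
    _ ≤ k - 1 := h

lemma exists_comp_card_le [Finite W] {A : SimpleGraph V} {B : SimpleGraph W}
    (φ : A →g B) (hφ : Function.Injective φ) (c : A.ConnectedComponent) :
    ∃ d : B.ConnectedComponent, (∀ x, x ∈ c.supp → φ x ∈ d.supp) ∧
      Nat.card c.supp ≤ Nat.card d.supp := by
  have key : ∀ (x : V), x ∈ c.supp → φ x ∈ (c.map φ).supp := by
    intro x hx
    rw [ConnectedComponent.mem_supp_iff] at hx ⊢
    rw [← hx, ConnectedComponent.map_mk]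
  refine ⟨c.map φ, key, ?_⟩
  · refine Nat.card_le_card_of_injective (fun x => ⟨φ x, key x.1 x.2⟩) ?_
    intro a b hab
    simp only [Subtype.mk_eq_mk] at hab
    exact Subtype.ext (hφ hab)

lemma reachable_induce_of_walk {G : SimpleGraph V} {a b : V} (w : G.Walk a b)
    (T : Set V) (h : ∀ v ∈ w.support, v ∈ T) (ha : a ∈ T) (hb : b ∈ T) :
    (G.induce T).Reachable ⟨a, ha⟩ ⟨b, hb⟩ := by
  induction w with
  | nil => exact Reachable.refl _
  | @cons u v b hadj p ih =>
    have hv : v ∈ T := h v (by simp)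
    have h1 : (G.induce T).Adj ⟨u, ha⟩ ⟨v, hv⟩ := by
      simp only [comap_adj, Function.Embedding.coe_subtype]
      exact hadj
    exact (h1.reachable).trans (ih (fun x hx => h x (by simp [hx])) hv hb)

lemma walk_support_closed {A : SimpleGraph W} {B : Set W}
    (hcl : ∀ b ∈ B, ∀ y, A.Adj b y → y ∈ B) {a b : W} (w : A.Walk a b) (ha : a ∈ B) :
    ∀ v ∈ w.support, v ∈ B := by
  induction w with
  | nil => intro v hv; simp at hv; subst hv; exact ha
  | @cons u v b hadj p ih =>
    intro z hz
    rw [Walk.support_cons, List.mem_cons] at hz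
    rcases hz with rfl | hz
    · exact ha
    · exact ih (hcl u ha v hadj) z hz

end Helpers

section Induce

variable {V : Type*}

/-- The homomorphism from an induced subgraph into the ambient graph. -/
def induceVal (G : SimpleGraph V) (S : Set V) : G.induce S →g G where
  toFun := Subtype.val
  map_rel' := fun h => h

lemma induceVal_injective (G : SimpleGraph V) (S : Set V) :
    Function.Injective (induceVal G S) := Subtype.val_injective

/-- Induced subgraph of an induced subgraph is isomorphic to the induced subgraph
on the image. -/
noncomputable def induceInduceIso (G : SimpleGraph V) (S : Set V) (T : Set ↥S) :
    (G.induce S).induce T ≃g G.induce (Subtype.val '' T) where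
  toEquiv := Equiv.Set.image Subtype.val T Subtype.val_injective
  map_rel_iff' := by
    rintro ⟨⟨a, ha⟩, haT⟩ ⟨⟨b, hb⟩, hbT⟩
    simp [Equiv.Set.image, Equiv.Set.imageOfInjOn]

lemma isGenKIndep_image [Finite V] {G : SimpleGraph V} {k : ℕ} {S : Set V} {T : Set ↥S}
    (h : IsGenKIndep (G.induce S) k T) : IsGenKIndep G k (Subtype.val '' T) := by
  intro c
  have e := (induceInduceIso G S T).symm
  obtain ⟨d, _, hle⟩ := exists_comp_card_le e.toHom (e.injective) c
  exact hle.trans (h d)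

lemma alphaK_induce_le [Finite V] (G : SimpleGraph V) (S : Set V) (k : ℕ) :
    alphaK (G.induce S) k ≤ alphaK G k := by
  obtain ⟨T, hT, hcard⟩ := exists_alphaK (G.induce S) k
  rw [← hcard]
  have : (Subtype.val '' T).ncard = T.ncard := by
    rw [Set.ncard_image_of_injective _ Subtype.val_injective]
  rw [← this]
  exact ncard_le_alphaK (isGenKIndep_image hT)

lemma isAcyclic_induce {G : SimpleGraph V} (h : G.IsAcyclic) (S : Set V) :
    (G.induce S).IsAcyclic := by
  intro v w hw
  exact h ((w.map (induceVal G S))) (hw.map (induceVal_injective G S))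

end Induce

section L4

variable {V : Type*}

lemma card_le_edge_add_comp [Fintype V] (G : SimpleGraph V) :
    Nat.card V ≤ Nat.card G.edgeSet + Nat.card G.ConnectedComponent := by
  classical
  set r : V → V := fun v => (G.connectedComponentMk v).out with hr_def
  have hmkr : ∀ v, G.connectedComponentMk (r v) = G.connectedComponentMk v := by
    intro v
    exact Quot.out_eq _
  have hreach : ∀ v, G.Reachable v (r v) := by
    intro v
    exact ConnectedComponent.exact (hmkr v).symm
  have hpar : ∀ v, v ≠ r v → ∃ u, G.Adj v u ∧ G.dist u (r v) + 1 ≤ G.dist v (r v) := by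
    intro v hv
    have hre : G.Reachable v (r v) := hreach v
    revert hv hre
    generalize r v = w
    intro hv hre
    obtain ⟨p, hp⟩ := hre.exists_walk_length_eq_dist
    cases p with
    | nil => exact absurd rfl hv
    | @cons _ u _ hadj q =>
      refine ⟨u, hadj, ?_⟩
      have h1 : G.dist u w ≤ q.length := SimpleGraph.dist_le q
      have h2 : q.length + 1 = G.dist v w := by
        simpa [Nat.add_comm] using hp
      omega
  let par : V → V := fun v => if h : v ≠ r v then (hpar v h).choose else v
  have hpadj : ∀ v, v ≠ r v → G.Adj v (par v) := by
    intro v hv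
    simp only [par, dif_pos hv]
    exact (hpar v hv).choose_spec.1
  have hpdist : ∀ v, v ≠ r v → G.dist (par v) (r v) + 1 ≤ G.dist v (r v) := by
    intro v hv
    simp only [par, dif_pos hv]
    exact (hpar v hv).choose_spec.2
  set f : V → G.edgeSet ⊕ G.ConnectedComponent := fun v =>
    if h : v = r v then Sum.inr (G.connectedComponentMk v)
    else Sum.inl ⟨s(v, par v), (G.mem_edgeSet).mpr (hpadj v h)⟩ with hf_def
  have hinj : Function.Injective f := by
    intro a b hab
    by_cases ha : a = r a <;> by_cases hb : b = r b
    · have hfa : f a = Sum.inr (G.connectedComponentMk a) := dif_pos ha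
      have hfb : f b = Sum.inr (G.connectedComponentMk b) := dif_pos hb
      rw [hfa, hfb] at hab
      have h1 : G.connectedComponentMk a = G.connectedComponentMk b := Sum.inr.inj hab
      have h2 : r a = r b := by
        show (G.connectedComponentMk a).out = (G.connectedComponentMk b).out
        rw [h1]
      exact ha.trans (h2.trans hb.symm)
    · have hfa : f a = Sum.inr (G.connectedComponentMk a) := dif_pos ha
      have hfb : f b = Sum.inl ⟨s(b, par b), (G.mem_edgeSet).mpr (hpadj b hb)⟩ := dif_neg hb
      rw [hfa, hfb] at hab
      simp at hab
    · have hfa : f a = Sum.inl ⟨s(a, par a), (G.mem_edgeSet).mpr (hpadj a ha)⟩ := dif_neg ha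
      have hfb : f b = Sum.inr (G.connectedComponentMk b) := dif_pos hb
      rw [hfa, hfb] at hab
      simp at hab
    · have hfa : f a = Sum.inl ⟨s(a, par a), (G.mem_edgeSet).mpr (hpadj a ha)⟩ := dif_neg ha
      have hfb : f b = Sum.inl ⟨s(b, par b), (G.mem_edgeSet).mpr (hpadj b hb)⟩ := dif_neg hb
      rw [hfa, hfb] at hab
      have hs : s(a, par a) = s(b, par b) := Subtype.ext_iff.mp (Sum.inl.inj hab)
      rw [Sym2.eq_iff] at hs
      rcases hs with ⟨h1, _⟩ | ⟨h1, h2⟩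
      · exact h1
      · exfalso
        have hadj : G.Adj a b := by
          have := hpadj b hb
          rw [← h1] at this
          exact this.symm
        have hcomp : G.connectedComponentMk a = G.connectedComponentMk b :=
          ConnectedComponent.connectedComponentMk_eq_of_adj hadj
        have hrr : r a = r b := by
          show (G.connectedComponentMk a).out = (G.connectedComponentMk b).out
          rw [hcomp]
        have d1 := hpdist a ha
        have d2 := hpdist b hb
        rw [h2] at d1
        rw [← h1] at d2
        rw [hrr] at d1
        omega
  have := Nat.card_le_card_of_injective f hinj
  rwa [Nat.card_sum] at this

end L4

section CycleExtract

variable {V : Type*}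

lemma onCycle_extract {G : SimpleGraph V} {x : V} (hx : OnCycle G x) :
    ∃ u1 u2, G.Adj x u1 ∧ G.Adj x u2 ∧ u1 ≠ u2 ∧
      ∃ (w : G.Walk u2 u1), ∀ v ∈ w.support, v ≠ x := by
  classical
  obtain ⟨u, w, hw, hxw⟩ := hx
  have hc : (w.rotate x hxw).IsCycle := hw.rotate hxw
  revert hc
  generalize w.rotate x hxw = c
  intro hc
  cases c with
  | nil => exact (hc.ne_nil rfl).elim
  | @cons _ u1 _ hadj q =>
    obtain ⟨hqp, hedge⟩ := (Walk.cons_isCycle_iff q hadj).mp hc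
    have hlen : 3 ≤ q.length + 1 := by
      have := hc.three_le_length
      simpa using this
    have hqrpath : q.reverse.IsPath := hqp.reverse
    have hqrlen : q.reverse.length = q.length := Walk.length_reverse q
    revert hqrpath hqrlen
    generalize q.reverse = qr
    intro hqrpath hqrlen
    cases qr with
    | nil => exact (G.loopless.irrefl x hadj).elim
    | @cons _ u2 _ hadj2 rr =>
      have hnodup : (Walk.cons hadj2 rr).support.Nodup := hqrpath.support_nodup
      rw [Walk.support_cons] at hnodup
      have hxnotin : x ∉ rr.support := (List.nodup_cons.mp hnodup).1
      have hrrpath : rr.IsPath := ((Walk.cons_isPath_iff hadj2 rr).mp hqrpath).1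
      have hne : u1 ≠ u2 := by
        intro heq
        cases rr with
        | nil =>
          simp only [Walk.length_cons, Walk.length_nil] at hqrlen
          omega
        | @cons _ z _ hadj3 rr2 =>
          have hnd : (Walk.cons hadj3 rr2).support.Nodup := hrrpath.support_nodup
          rw [Walk.support_cons] at hnd
          have : u2 ∉ rr2.support := (List.nodup_cons.mp hnd).1
          rw [← heq] at this
          exact this (Walk.end_mem_support rr2)
      exact ⟨u1, u2, hadj, hadj2, hne, rr, fun v hv hvx => hxnotin (hvx ▸ hv)⟩

end CycleExtract

section LCyc

variable {V : Type*}

/-- The embedding of an induced subgraph into the ambient graph. -/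
def induceEmb (G : SimpleGraph V) (S : Set V) : G.induce S ↪g G where
  toFun := Subtype.val
  inj' := Subtype.val_injective
  map_rel_iff' := Iff.rfl

lemma map_mk_val (G : SimpleGraph V) (S : Set V) (a : ↥S) :
    ((G.induce S).connectedComponentMk a).map (induceVal G S) =
      G.connectedComponentMk ↑a :=
  ConnectedComponent.map_mk _ _

lemma edge_comp_drop [Fintype V] (G : SimpleGraph V) (x : V) (hx : OnCycle G x) :
    Nat.card (G.induce {y | y ≠ x}).edgeSet +
      Nat.card (G.induce {y | y ≠ x}).ConnectedComponent + 2 ≤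
      Nat.card G.edgeSet + Nat.card G.ConnectedComponent := by
  classical
  obtain ⟨u1, u2, h1, h2, hne, rr, hrr⟩ := onCycle_extract hx
  set S : Set V := {y | y ≠ x} with hS_def
  have hu1 : u1 ∈ S := h1.ne'
  have hu2 : u2 ∈ S := h2.ne'
  set c1 : (G.induce S).ConnectedComponent :=
    (G.induce S).connectedComponentMk ⟨u1, hu1⟩ with hc1_def
  have hc12 : (G.induce S).connectedComponentMk ⟨u2, hu2⟩ = c1 := by
    apply ConnectedComponent.sound
    exact reachable_induce_of_walk rr S (fun v hv => hrr v hv) hu2 hu1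
  -- key: every component mapping onto x's component contains a neighbor of x
  have hkey : ∀ D : (G.induce S).ConnectedComponent,
      D.map (induceVal G S) = G.connectedComponentMk x →
      ∃ y, G.Adj x y ∧ ∃ (hy : y ∈ S), (G.induce S).connectedComponentMk ⟨y, hy⟩ = D := by
    intro D hD
    obtain ⟨⟨b, hb⟩, hbD0⟩ := D.exists_rep
    have hbD : (G.induce S).connectedComponentMk ⟨b, hb⟩ = D := hbD0
    have e1 : D.map (induceVal G S) = G.connectedComponentMk b := by
      rw [← hbD]; exact map_mk_val G S ⟨b, hb⟩
    have hmapb : G.connectedComponentMk b = G.connectedComponentMk x := by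
      rw [← e1, hD]
    have hreach : G.Reachable b x := ConnectedComponent.exact hmapb
    obtain ⟨p0⟩ := hreach
    have hpw : (p0.toPath : G.Walk b x).IsPath := p0.toPath.2
    have hrev : (p0.toPath : G.Walk b x).reverse.IsPath := hpw.reverse
    revert hrev
    generalize (p0.toPath : G.Walk b x).reverse = qr
    intro hrev
    cases qr with
    | nil => exact (hb rfl).elim
    | @cons _ y _ hadjxy rr2 =>
      have hnodup : (Walk.cons hadjxy rr2).support.Nodup := hrev.support_nodup
      rw [Walk.support_cons] at hnodup
      have hxnotin : x ∉ rr2.support := (List.nodup_cons.mp hnodup).1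
      have hy : y ∈ S := hadjxy.ne'
      refine ⟨y, hadjxy, hy, ?_⟩
      rw [← hbD]
      apply ConnectedComponent.sound
      exact reachable_induce_of_walk rr2 S
        (fun v hv => fun hvx => hxnotin (hvx ▸ hv)) hy hb
  -- injectivity of map on components avoiding x's component
  have hfinj : ∀ D D' : (G.induce S).ConnectedComponent,
      D.map (induceVal G S) ≠ G.connectedComponentMk x →
      D.map (induceVal G S) = D'.map (induceVal G S) → D = D' := by
    intro D D' hDx hDD
    obtain ⟨⟨b, hb⟩, hbD0⟩ := D.exists_rep
    obtain ⟨⟨b', hb'⟩, hbD0'⟩ := D'.exists_rep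
    have hbD : (G.induce S).connectedComponentMk ⟨b, hb⟩ = D := hbD0
    have hbD' : (G.induce S).connectedComponentMk ⟨b', hb'⟩ = D' := hbD0'
    have e1 : D.map (induceVal G S) = G.connectedComponentMk b := by
      rw [← hbD]; exact map_mk_val G S ⟨b, hb⟩
    have e2 : D'.map (induceVal G S) = G.connectedComponentMk b' := by
      rw [← hbD']; exact map_mk_val G S ⟨b', hb'⟩
    have hmapbb : G.connectedComponentMk b = G.connectedComponentMk b' := by
      rw [← e1, ← e2, hDD]
    have hreach : G.Reachable b b' := ConnectedComponent.exact hmapbb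
    obtain ⟨p0⟩ := hreach
    have hxnot : x ∉ (p0.toPath : G.Walk b b').support := by
      intro hxin
      have hq : G.Reachable b x :=
        ⟨(p0.toPath : G.Walk b b').takeUntil x hxin⟩
      apply hDx
      rw [e1]
      exact ConnectedComponent.sound hq
    rw [← hbD, ← hbD']
    apply ConnectedComponent.sound
    exact reachable_induce_of_walk (p0.toPath : G.Walk b b') S
      (fun v hv => fun hvx => hxnot (hvx ▸ hv)) hb hb'
  -- neighbor choice
  have hnbr : ∀ (D : (G.induce S).ConnectedComponent)
      (hD : D.map (induceVal G S) = G.connectedComponentMk x),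
      G.Adj x ((hkey D hD).choose) ∧
      ∃ (hy : (hkey D hD).choose ∈ S),
        (G.induce S).connectedComponentMk ⟨(hkey D hD).choose, hy⟩ = D :=
    fun D hD => (hkey D hD).choose_spec
  have hnbr_ne : ∀ (D : (G.induce S).ConnectedComponent)
      (hD : D.map (induceVal G S) = G.connectedComponentMk x),
      D ≠ c1 → (hkey D hD).choose ≠ u1 ∧ (hkey D hD).choose ≠ u2 := by
    intro D hD hDc1
    obtain ⟨-, hy, hmk⟩ := hnbr D hD
    constructor
    · intro heq
      apply hDc1
      rw [← hmk, hc1_def]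
      exact congrArg _ (Subtype.ext heq)
    · intro heq
      apply hDc1
      rw [← hmk, ← hc12]
      exact congrArg _ (Subtype.ext heq)
  have hxnotedge : ∀ e : (G.induce S).edgeSet,
      x ∉ (((induceEmb G S).mapEdgeSet e : G.edgeSet) : Sym2 V) := by
    intro e hxin
    have heq : (((induceEmb G S).mapEdgeSet e : G.edgeSet) : Sym2 V) =
        Sym2.map Subtype.val (e : Sym2 ↥S) := rfl
    rw [heq, Sym2.mem_map] at hxin
    obtain ⟨⟨a, ha⟩, -, hax⟩ := hxin
    exact ha hax
  -- the injection
  set Ψ : (G.induce S).edgeSet ⊕ ((G.induce S).ConnectedComponent ⊕ Fin 2) →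
      G.edgeSet ⊕ G.ConnectedComponent := fun z =>
    match z with
    | .inl e => .inl ((induceEmb G S).mapEdgeSet e)
    | .inr (.inr i) =>
        if i = 0 then .inl ⟨s(x, u1), (G.mem_edgeSet).mpr h1⟩
        else .inl ⟨s(x, u2), (G.mem_edgeSet).mpr h2⟩
    | .inr (.inl D) =>
        if D = c1 then .inr (G.connectedComponentMk x)
        else if hD2 : D.map (induceVal G S) = G.connectedComponentMk x then
          .inl ⟨s(x, (hkey D hD2).choose), (G.mem_edgeSet).mpr (hnbr D hD2).1⟩
        else .inr (D.map (induceVal G S))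
    with hΨ_def
  have hinj : Function.Injective Ψ := by
    rintro (e | (D | i)) (e' | (D' | i')) h
    · -- edge edge
      simp only [hΨ_def] at h
      have := (induceEmb G S).mapEdgeSet.injective (Sum.inl.inj h)
      rw [this]
    · -- edge vs component
      exfalso
      simp only [hΨ_def] at h
      split_ifs at h
      all_goals first
        | exact Sum.noConfusion h
        | (have he := Sum.inl.inj h; apply hxnotedge e; rw [he]; exact Sym2.mem_mk_left x _)
    · -- edge vs fin
      exfalso
      simp only [hΨ_def] at h
      split_ifs at h
      all_goals first
        | exact Sum.noConfusion h
        | (have he := Sum.inl.inj h; apply hxnotedge e; rw [he]; exact Sym2.mem_mk_left x _)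
    · -- component vs edge
      exfalso
      simp only [hΨ_def] at h
      split_ifs at h
      all_goals first
        | exact Sum.noConfusion h
        | (have he := Sum.inl.inj h; apply hxnotedge e'; rw [← he]; exact Sym2.mem_mk_left x _)
    · -- component vs component
      simp only [hΨ_def] at h
      by_cases hc : D = c1 <;> by_cases hc' : D' = c1
      · rw [hc, hc']
      · exfalso
        rw [if_pos hc, if_neg hc'] at h
        by_cases hd' : D'.map (induceVal G S) = G.connectedComponentMk x
        · rw [dif_pos hd'] at h
          cases h
        · rw [dif_neg hd'] at h
          exact absurd (Sum.inr.inj h).symm hd'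
      · exfalso
        rw [if_neg hc, if_pos hc'] at h
        by_cases hd : D.map (induceVal G S) = G.connectedComponentMk x
        · rw [dif_pos hd] at h
          cases h
        · rw [dif_neg hd] at h
          exact absurd (Sum.inr.inj h) hd
      · rw [if_neg hc, if_neg hc'] at h
        by_cases hd : D.map (induceVal G S) = G.connectedComponentMk x <;>
          by_cases hd' : D'.map (induceVal G S) = G.connectedComponentMk x
        · rw [dif_pos hd, dif_pos hd'] at h
          have hs := Subtype.ext_iff.mp (Sum.inl.inj h)
          rw [Sym2.eq_iff] at hs
          rcases hs with ⟨-, hyy⟩ | ⟨hxy, -⟩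
          · obtain ⟨hy, hmk⟩ := (hnbr D hd).2
            obtain ⟨hy', hmk'⟩ := (hnbr D' hd').2
            rw [← hmk, ← hmk']
            have hsub : (⟨(hkey D hd).choose, hy⟩ : ↥S) =
                (⟨(hkey D' hd').choose, hy'⟩ : ↥S) := Subtype.ext hyy
            rw [hsub]
          · exact absurd hxy.symm ((hnbr D' hd').2.choose)
        · rw [dif_pos hd, dif_neg hd'] at h
          cases h
        · rw [dif_neg hd, dif_pos hd'] at h
          cases h
        · rw [dif_neg hd, dif_neg hd'] at h
          rw [hfinj D D' hd (Sum.inr.inj h)]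
    · -- component vs fin
      exfalso
      simp only [hΨ_def] at h
      by_cases hc : D = c1
      · rw [if_pos hc] at h
        by_cases hi : i' = 0
        · rw [if_pos hi] at h; cases h
        · rw [if_neg hi] at h; cases h
      · by_cases hd : D.map (induceVal G S) = G.connectedComponentMk x
        · rw [if_neg hc, dif_pos hd] at h
          by_cases hi : i' = 0
          · rw [if_pos hi] at h
            have hs := Subtype.ext_iff.mp (Sum.inl.inj h)
            rw [Sym2.eq_iff] at hs
            rcases hs with ⟨-, hyy⟩ | ⟨-, hxy⟩
            · exact (hnbr_ne D hd hc).1 hyy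
            · exact absurd hxy ((hnbr D hd).2.choose)
          · rw [if_neg hi] at h
            have hs := Subtype.ext_iff.mp (Sum.inl.inj h)
            rw [Sym2.eq_iff] at hs
            rcases hs with ⟨-, hyy⟩ | ⟨-, hxy⟩
            · exact (hnbr_ne D hd hc).2 hyy
            · exact absurd hxy ((hnbr D hd).2.choose)
        · rw [if_neg hc, dif_neg hd] at h
          by_cases hi : i' = 0
          · rw [if_pos hi] at h; cases h
          · rw [if_neg hi] at h; cases h
    · -- fin vs edge
      exfalso
      simp only [hΨ_def] at h
      split_ifs at h
      all_goals first
        | exact Sum.noConfusion h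
        | (have he := Sum.inl.inj h; apply hxnotedge e'; rw [← he]; exact Sym2.mem_mk_left x _)
    · -- fin vs component
      exfalso
      simp only [hΨ_def] at h
      by_cases hc : D' = c1
      · rw [if_pos hc] at h
        by_cases hi : i = 0
        · rw [if_pos hi] at h; cases h
        · rw [if_neg hi] at h; cases h
      · by_cases hd : D'.map (induceVal G S) = G.connectedComponentMk x
        · rw [if_neg hc, dif_pos hd] at h
          by_cases hi : i = 0
          · rw [if_pos hi] at h
            have hs := Subtype.ext_iff.mp (Sum.inl.inj h)
            rw [Sym2.eq_iff] at hs
            rcases hs with ⟨-, hyy⟩ | ⟨hxy, -⟩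
            · exact (hnbr_ne D' hd hc).1 hyy.symm
            · exact absurd hxy.symm ((hnbr D' hd).2.choose)
          · rw [if_neg hi] at h
            have hs := Subtype.ext_iff.mp (Sum.inl.inj h)
            rw [Sym2.eq_iff] at hs
            rcases hs with ⟨-, hyy⟩ | ⟨hxy, -⟩
            · exact (hnbr_ne D' hd hc).2 hyy.symm
            · exact absurd hxy.symm ((hnbr D' hd).2.choose)
        · rw [if_neg hc, dif_neg hd] at h
          by_cases hi : i = 0
          · rw [if_pos hi] at h; cases h
          · rw [if_neg hi] at h; cases h
    · -- fin vs fin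
      simp only [hΨ_def] at h
      by_cases hi : i = 0 <;> by_cases hi' : i' = 0
      · rw [hi, hi']
      · exfalso
        rw [if_pos hi, if_neg hi'] at h
        have hs := Subtype.ext_iff.mp (Sum.inl.inj h)
        rw [Sym2.eq_iff] at hs
        rcases hs with ⟨-, hyy⟩ | ⟨hxy, -⟩
        · exact hne hyy
        · exact h2.ne' hxy.symm
      · exfalso
        rw [if_neg hi, if_pos hi'] at h
        have hs := Subtype.ext_iff.mp (Sum.inl.inj h)
        rw [Sym2.eq_iff] at hs
        rcases hs with ⟨-, hyy⟩ | ⟨hxy, -⟩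
        · exact hne hyy.symm
        · exact h1.ne' hxy.symm
      · have hiv : i = i' := by
          have hlt1 := i.isLt
          have hlt2 := i'.isLt
          have h3 : i.val ≠ 0 := fun hz => hi (Fin.ext hz)
          have h4 : i'.val ≠ 0 := fun hz => hi' (Fin.ext hz)
          exact Fin.ext (by omega)
        rw [hiv]
  have hcard := Nat.card_le_card_of_injective Ψ hinj
  simp only [Nat.card_sum] at hcard
  have h2c : Nat.card (Fin 2) = 2 := by simp
  rw [h2c] at hcard
  omega

end LCyc

section Union

variable {V : Type*}

lemma comp_card_le_of_closed [Finite V] {G : SimpleGraph V} {T U : Set V}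
    (hcl : ∀ b ∈ U, ∀ y, G.Adj b y → y ∈ T → y ∈ U)
    (c : (G.induce T).ConnectedComponent) {a : V} (haT : a ∈ T) (haU : a ∈ U)
    (hac : (G.induce T).connectedComponentMk ⟨a, haT⟩ = c) :
    ∃ d : (G.induce U).ConnectedComponent, Nat.card c.supp ≤ Nat.card d.supp := by
  classical
  set d := (G.induce U).connectedComponentMk ⟨a, haU⟩ with hd_def
  have hsupp : ∀ z : ↥T, z ∈ c.supp → ∃ (hz : ↑z ∈ U),
      (G.induce U).connectedComponentMk ⟨↑z, hz⟩ = d := by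
    intro z hz
    rw [ConnectedComponent.mem_supp_iff] at hz
    have hreach : (G.induce T).Reachable ⟨a, haT⟩ z :=
      ConnectedComponent.exact (hac.trans hz.symm)
    obtain ⟨w⟩ := hreach
    -- all support of w lies in Ũ
    have hcl' : ∀ p ∈ {q : ↥T | ↑q ∈ U}, ∀ q : ↥T, (G.induce T).Adj p q →
        q ∈ {q : ↥T | ↑q ∈ U} := by
      intro p hp q hadj
      exact hcl ↑p hp ↑q hadj q.2
    have hsup := walk_support_closed hcl' w haU
    have hzU : ↑z ∈ U := hsup z (Walk.end_mem_support w)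
    refine ⟨hzU, ?_⟩
    -- map the walk down to G and up into G.induce U
    have hw' : ∀ v ∈ (w.map (induceVal G T)).support, v ∈ U := by
      intro v hv
      rw [Walk.support_map] at hv
      obtain ⟨q, hq, rfl⟩ := List.mem_map.mp hv
      exact hsup q hq
    have hre := reachable_induce_of_walk (w.map (induceVal G T)) U hw' haU hzU
    have : (G.induce U).connectedComponentMk ⟨↑z, hzU⟩ =
        (G.induce U).connectedComponentMk ⟨a, haU⟩ := ConnectedComponent.sound hre.symm
    rw [this, hd_def]
  refine ⟨d, ?_⟩
  refine Nat.card_le_card_of_injective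
    (fun z => ⟨⟨↑(z : ↥T), (hsupp z z.2).choose⟩, (hsupp z z.2).choose_spec⟩) ?_
  intro z z' hzz
  apply Subtype.ext
  apply Subtype.ext
  have := congrArg (fun q => ((q : ↥U) : V)) (Subtype.ext_iff.mp hzz)
  exact this

lemma isGenKIndep_union [Finite V] {G : SimpleGraph V} {k : ℕ} {B : Set V} {v : V}
    (hvB : v ∉ B) (hB : IsGenKIndep G k B)
    (hcl : ∀ b ∈ B, ∀ y, G.Adj b y → y ∈ B ∨ y = v)
    {S : Set V} (hSB : ∀ s ∈ S, s ∉ B ∧ s ≠ v)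
    (hS : IsGenKIndep G k S) : IsGenKIndep G k (S ∪ B) := by
  classical
  intro c
  obtain ⟨⟨a, haT⟩, hac0⟩ := c.exists_rep
  have hac : (G.induce (S ∪ B)).connectedComponentMk ⟨a, haT⟩ = c := hac0
  by_cases haB : a ∈ B
  · have hclB : ∀ b ∈ B, ∀ y, G.Adj b y → y ∈ S ∪ B → y ∈ B := by
      intro b hb y hadj hyT
      rcases hcl b hb y hadj with hyB | rfl
      · exact hyB
      · exfalso
        rcases hyT with hyS | hyB
        · exact (hSB _ hyS).2 rfl
        · exact hvB hyB
    obtain ⟨d, hle⟩ := comp_card_le_of_closed hclB c haT haB hac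
    exact hle.trans (hB d)
  · have haS : a ∈ S := haT.resolve_right haB
    have hclS : ∀ b ∈ S, ∀ y, G.Adj b y → y ∈ S ∪ B → y ∈ S := by
      intro b hb y hadj hyT
      rcases hyT with hyS | hyB
      · exact hyS
      · exfalso
        rcases hcl y hyB b hadj.symm with hbB | rfl
        · exact (hSB _ hb).1 hbB
        · exact (hSB _ hb).2 rfl
    obtain ⟨d, hle⟩ := comp_card_le_of_closed hclS c haT haS hac
    exact hle.trans (hS d)

end Union

section Pendant

variable {V : Type*}

lemma pendant_chunk [Fintype V] {G : SimpleGraph V} (hG : G.IsAcyclic) {k : ℕ} (hk : 2 ≤ k)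
    (c0 : G.ConnectedComponent) (hc0 : k ≤ Nat.card c0.supp) :
    ∃ (v : V) (B : Set V), v ∉ B ∧ k - 1 ≤ B.ncard ∧ B.ncard + 1 ≤ Nat.card V ∧
      (∀ b ∈ B, ∀ y, G.Adj b y → y ∈ B ∨ y = v) ∧ IsGenKIndep G k B := by
  classical
  have hnV : k ≤ Nat.card V := hc0.trans (card_supp_le_nat_card G c0)
  by_cases hP : ∃ p : (Σ v : V, (G.induce {y | y ≠ v}).ConnectedComponent),
      k - 1 ≤ Nat.card p.2.supp
  case neg =>
    -- no vertex-deleted component is large: removing any vertex of c0 works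
    obtain ⟨w0, hw0⟩ := c0.exists_rep
    have hcompl : ({y | y ≠ w0} : Set V) = ({w0} : Set V)ᶜ := by
      ext y; simp
    have hcc : ({y | y ≠ w0} : Set V).ncard + 1 = Nat.card V := by
      rw [hcompl]
      have h2 := Set.ncard_add_ncard_compl ({w0} : Set V)
      rw [Set.ncard_singleton] at h2
      have h3 : (Set.univ : Set V).ncard = Nat.card V := Set.ncard_univ V
      omega
    refine ⟨w0, {y | y ≠ w0}, by simp, by omega, by omega, ?_, ?_⟩
    · intro b _ y _
      by_cases hy : y = w0
      · exact Or.inr hy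
      · exact Or.inl hy
    · intro c
      push_neg at hP
      have := hP ⟨w0, c⟩
      dsimp only at this
      omega
  case pos =>
    set N := {m | ∃ p : (Σ v : V, (G.induce {y | y ≠ v}).ConnectedComponent),
        k - 1 ≤ Nat.card p.2.supp ∧ Nat.card p.2.supp = m} with hN_def
    have hNne : N.Nonempty := by
      obtain ⟨p, hp⟩ := hP
      exact ⟨Nat.card p.2.supp, p, hp, rfl⟩
    obtain ⟨⟨v, D⟩, hD1, hD2⟩ := Nat.sInf_mem hNne
    set mn := sInf N with hmn_def
    have hmin : ∀ (u : V) (E : (G.induce {y | y ≠ u}).ConnectedComponent),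
        k - 1 ≤ Nat.card E.supp → mn ≤ Nat.card E.supp := by
      intro u E hE
      exact Nat.sInf_le ⟨⟨u, E⟩, hE, rfl⟩
    have hkm : k - 1 ≤ mn := hD2 ▸ hD1
    set U : Set V := Subtype.val '' D.supp with hU_def
    have hUcard : U.ncard = mn := by
      rw [hU_def, Set.ncard_image_of_injective _ Subtype.val_injective,
        ← Nat.card_coe_set_eq, hD2]
    have hvU : v ∉ U := by
      rintro ⟨⟨z, hz⟩, -, hzeq⟩
      exact hz hzeq
    have hUclosed : ∀ b ∈ U, ∀ y, G.Adj b y → y ≠ v → y ∈ U := by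
      rintro b ⟨⟨b', hb'⟩, hbD, rfl⟩ y hadj hyv
      have hadj' : (G.induce {y | y ≠ v}).Adj ⟨b', hb'⟩ ⟨y, hyv⟩ := hadj
      refine ⟨⟨y, hyv⟩, ?_, rfl⟩
      rw [ConnectedComponent.mem_supp_iff] at hbD ⊢
      rw [← hbD]
      exact (ConnectedComponent.connectedComponentMk_eq_of_adj hadj').symm
    have hUn : Nat.card V ≥ U.ncard + 1 := by
      have h1 : (insert v U).ncard = U.ncard + 1 := Set.ncard_insert_of_notMem hvU
      have h2 : (insert v U).ncard ≤ Nat.card V := by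
        rw [← Set.ncard_univ]
        exact Set.ncard_le_ncard (Set.subset_univ _) Set.finite_univ
      omega
    by_cases hmn1 : mn = k - 1
    case pos =>
      refine ⟨v, U, hvU, by omega, by omega, ?_, ?_⟩
      · intro b hb y hadj
        by_cases hyv : y = v
        · exact Or.inr hyv
        · exact Or.inl (hUclosed b hb y hadj hyv)
      · exact isGenKIndep_of_ncard_le (by omega)
    case neg =>
      have hmnk : k ≤ mn := by omega
      have hUne : U.Nonempty := by
        rw [← Set.ncard_pos]
        omega
      -- choose the unique possible neighbor u of v in U
      have huex : ∃ u ∈ U, ∀ y ∈ U, G.Adj v y → y = u := by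
        by_cases hvadj : ∃ y ∈ U, G.Adj v y
        · obtain ⟨u, huU, hu⟩ := hvadj
          refine ⟨u, huU, ?_⟩
          intro y hyU hyadj
          by_contra hyu
          -- build a cycle through v
          obtain ⟨ut, huD, hueq⟩ := huU
          obtain ⟨yt, hyD, hyeq⟩ := hyU
          rw [ConnectedComponent.mem_supp_iff] at huD hyD
          have hreach : (G.induce {w | w ≠ v}).Reachable ut yt :=
            ConnectedComponent.exact (huD.trans hyD.symm)
          obtain ⟨wt⟩ := hreach
          set w' := (wt.map (induceVal G {w | w ≠ v})).copy hueq hyeq with hw'_def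
          have hw' : ∀ z ∈ w'.support, z ≠ v := by
            intro z hz
            have hsc := Walk.support_copy (wt.map (induceVal G {w | w ≠ v})) hueq hyeq
            rw [hw'_def, hsc, Walk.support_map] at hz
            obtain ⟨q, -, rfl⟩ := List.mem_map.mp hz
            exact q.2
          set p := w'.toPath with hp_def
          have hpv : v ∉ (p : G.Walk u y).support := by
            intro hv
            exact hw' v (Walk.support_toPath_subset w' hv) rfl
          have hppath : (p : G.Walk u y).IsPath := p.2
          have hrpath : (Walk.cons hyadj (p : G.Walk u y).reverse).IsPath := by
            rw [Walk.cons_isPath_iff]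
            refine ⟨hppath.reverse, ?_⟩
            rw [Walk.support_reverse, List.mem_reverse]
            exact hpv
          have hcyc : (Walk.cons hu (Walk.cons hyadj
              (p : G.Walk u y).reverse).reverse).IsCycle := by
            rw [Walk.cons_isCycle_iff]
            refine ⟨hrpath.reverse, ?_⟩
            rw [Walk.edges_reverse, List.mem_reverse, Walk.edges_cons]
            intro hmem
            rcases List.mem_cons.mp hmem with heq | hmem2
            · rw [Sym2.eq_iff] at heq
              rcases heq with ⟨-, huy⟩ | ⟨hvy, -⟩
              · exact hyu huy.symm
              · exact hyadj.ne hvy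
            · have := Walk.fst_mem_support_of_mem_edges _ hmem2
              rw [Walk.support_reverse, List.mem_reverse] at this
              exact hpv this
          exact hG _ hcyc
        · obtain ⟨u, huU⟩ := hUne
          refine ⟨u, huU, ?_⟩
          intro y hyU hyadj
          exact absurd ⟨y, hyU, hyadj⟩ hvadj
      obtain ⟨u, huU, huniq⟩ := huex
      have huv : u ≠ v := by
        rintro rfl
        exact hvU huU
      set B := U \ {u} with hB_def
      have hBcard : B.ncard = mn - 1 := by
        rw [hB_def, Set.ncard_diff_singleton_of_mem huU, hUcard]
      have hclB : ∀ b ∈ B, ∀ y, G.Adj b y → y ∈ B ∨ y = u := by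
        rintro b ⟨hbU, hbu⟩ y hadj
        by_cases hyu : y = u
        · exact Or.inr hyu
        · by_cases hyv : y = v
          · exfalso
            subst hyv
            exact hbu (huniq b hbU hadj.symm)
          · exact Or.inl ⟨hUclosed b hbU y hadj hyv, hyu⟩
      refine ⟨u, B, fun hB' => hB'.2 rfl, by omega, by omega, hclB, ?_⟩
      -- every component of G[B] is small by minimality at u
      intro c
      obtain ⟨⟨a, haB⟩, hac0⟩ := c.exists_rep
      have hac : (G.induce B).connectedComponentMk ⟨a, haB⟩ = c := hac0
      -- hom into G.induce {y ≠ u}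
      set φ : G.induce B →g G.induce {y | y ≠ u} :=
        ⟨fun z => ⟨↑z, z.2.2⟩, fun h => h⟩ with hφ_def
      have hφinj : Function.Injective φ := by
        intro z z' hzz
        apply Subtype.ext
        exact congrArg (fun q : ↥{y | y ≠ u} => (q : V)) hzz
      obtain ⟨d, hdmem, hdle⟩ := exists_comp_card_le φ hφinj c
      -- d.supp lives inside B
      have hdB : ∀ z : ↥{y | y ≠ u}, z ∈ d.supp → ↑z ∈ B := by
        intro z hz
        have hamem : φ ⟨a, haB⟩ ∈ d.supp := hdmem _ (by
          rw [ConnectedComponent.mem_supp_iff]; exact hac)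
        rw [ConnectedComponent.mem_supp_iff] at hz hamem
        have hreach : (G.induce {y | y ≠ u}).Reachable (φ ⟨a, haB⟩) z :=
          ConnectedComponent.exact (hamem.trans hz.symm)
        obtain ⟨w⟩ := hreach
        have hcl' : ∀ p ∈ {q : ↥{y | y ≠ u} | ↑q ∈ B}, ∀ q : ↥{y | y ≠ u},
            (G.induce {y | y ≠ u}).Adj p q → q ∈ {q : ↥{y | y ≠ u} | ↑q ∈ B} := by
          intro p hp q hadj
          rcases hclB ↑p hp ↑q hadj with hqB | hqu
          · exact hqB
          · exact absurd hqu q.2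
        have := walk_support_closed hcl' w haB z (Walk.end_mem_support w)
        exact this
      -- so |d.supp| ≤ |B| = mn - 1 < mn, whence by minimality |d.supp| ≤ k - 2
      have hdcard : Nat.card d.supp ≤ B.ncard := by
        have hinj2 : Function.Injective
            (fun z : d.supp => (⟨↑(z : ↥{y | y ≠ u}), hdB z z.2⟩ : ↥B)) := by
          intro z z' hzz
          apply Subtype.ext
          apply Subtype.ext
          exact congrArg (fun q : ↥B => (q : V)) hzz
        have := Nat.card_le_card_of_injective _ hinj2
        rwa [Nat.card_coe_set_eq] at this
      have hsmall : Nat.card d.supp ≤ k - 2 := by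
        by_contra hbig
        push_neg at hbig
        have h1 : k - 1 ≤ Nat.card d.supp := by omega
        have h2 := hmin u d h1
        omega
      calc Nat.card c.supp ≤ Nat.card d.supp := hdle
        _ ≤ k - 1 := by omega

end Pendant

section LowerBound

universe u

lemma lower_bound_aux (k : ℕ) (hk : 2 ≤ k) :
    ∀ (n : ℕ) {V : Type u} [Fintype V] (G : SimpleGraph V), Fintype.card V ≤ n →
      ((k - 1) * (Nat.card V - cycleDim G) ≤ k * alphaK G k ∧
        (G.IsAcyclic → (k - 1) * Nat.card V ≤ k * alphaK G k)) := by
  intro n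
  induction n with
  | zero =>
    intro V _ G hV
    have hV0 : Nat.card V = 0 := by rw [Nat.card_eq_fintype_card]; omega
    constructor
    · rw [hV0]; simp
    · intro _; rw [hV0]; simp
  | succ n ih =>
    intro V _ G hV
    classical
    by_cases hcyc : ∃ x, OnCycle G x
    · obtain ⟨x, hx⟩ := hcyc
      have hanti : ¬ G.IsAcyclic := by
        obtain ⟨u, w, hw, -⟩ := hx
        exact fun ha => ha w hw
      refine ⟨?_, fun ha => absurd ha hanti⟩
      haveI : Fintype ↥({y : V | y ≠ x}) := Fintype.ofFinite _
      have hcompl : ({y : V | y ≠ x} : Set V) = ({x} : Set V)ᶜ := by ext y; simp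
      have h2 := Set.ncard_add_ncard_compl ({x} : Set V)
      rw [Set.ncard_singleton] at h2
      have h3 : (Set.univ : Set V).ncard = Nat.card V := Set.ncard_univ V
      have hn' : Nat.card ↥({y : V | y ≠ x}) = Nat.card V - 1 := by
        rw [Nat.card_coe_set_eq, hcompl]; omega
      have hV1 : 1 ≤ Nat.card V := by
        have : Nonempty V := ⟨x⟩
        exact Nat.one_le_iff_ne_zero.mpr (Nat.card_ne_zero.mpr ⟨this, inferInstance⟩)
      have hIH := (ih (G.induce {y : V | y ≠ x}) (by
        have h4 : Nat.card V = Fintype.card V := Nat.card_eq_fintype_card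
        rw [← Nat.card_eq_fintype_card, hn']
        omega)).1
      have hA := alphaK_induce_le G {y : V | y ≠ x} k
      have hd := edge_comp_drop G x hx
      have hL4 := card_le_edge_add_comp G
      have hL4' := card_le_edge_add_comp (G.induce {y : V | y ≠ x})
      have hsub : Nat.card V - cycleDim G ≤
          Nat.card ↥({y : V | y ≠ x}) - cycleDim (G.induce {y : V | y ≠ x}) := by
        simp only [cycleDim]
        omega
      calc (k - 1) * (Nat.card V - cycleDim G)
          ≤ (k - 1) * (Nat.card ↥({y : V | y ≠ x}) -
            cycleDim (G.induce {y : V | y ≠ x})) := Nat.mul_le_mul_left _ hsub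
        _ ≤ k * alphaK (G.induce {y : V | y ≠ x}) k := hIH
        _ ≤ k * alphaK G k := Nat.mul_le_mul_left _ hA
    · have hacyc : G.IsAcyclic := by
        intro v c hc
        exact hcyc ⟨v, v, c, hc, Walk.start_mem_support c⟩
      have hii : (k - 1) * Nat.card V ≤ k * alphaK G k := by
        by_cases hbig : ∀ c : G.ConnectedComponent, Nat.card c.supp ≤ k - 1
        · have huniv : IsGenKIndep G k Set.univ := by
            intro c
            obtain ⟨d, -, hle⟩ := exists_comp_card_le (induceUnivIso G).toHom
              (induceUnivIso G).injective c
            exact hle.trans (hbig d)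
          have hle := ncard_le_alphaK huniv
          rw [Set.ncard_univ] at hle
          calc (k - 1) * Nat.card V ≤ k * Nat.card V :=
                Nat.mul_le_mul_right _ (by omega)
            _ ≤ k * alphaK G k := Nat.mul_le_mul_left _ hle
        · push_neg at hbig
          obtain ⟨c0, hc0⟩ := hbig
          have hc0' : k ≤ Nat.card c0.supp := by omega
          obtain ⟨v, B, hvB, hBk, hBn, hclB, hBind⟩ := pendant_chunk hacyc hk c0 hc0'
          set T : Set V := {y | y ∉ B ∧ y ≠ v} with hT_def
          haveI : Fintype ↥T := Fintype.ofFinite _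
          have hTcompl : T = (insert v B)ᶜ := by
            ext y
            simp only [hT_def, Set.mem_setOf_eq, Set.mem_compl_iff, Set.mem_insert_iff]
            tauto
          have hTc := Set.ncard_add_ncard_compl (insert v B)
          rw [Set.ncard_insert_of_notMem hvB] at hTc
          have h3 : (Set.univ : Set V).ncard = Nat.card V := Set.ncard_univ V
          have hTcard : Nat.card ↥T = Nat.card V - B.ncard - 1 := by
            rw [Nat.card_coe_set_eq, hTcompl]; omega
          have hBV : B.ncard + 1 ≤ Nat.card V := hBn
          have hIH := (ih (G.induce T) (by
            have h4 : Nat.card V = Fintype.card V := Nat.card_eq_fintype_card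
            rw [← Nat.card_eq_fintype_card, hTcard]
            omega)).2 (isAcyclic_induce hacyc T)
          obtain ⟨Tset, hTind, hTsetcard⟩ := exists_alphaK (G.induce T) k
          set S : Set V := Subtype.val '' Tset with hS_def
          have hSind : IsGenKIndep G k S := isGenKIndep_image hTind
          have hSB : ∀ s ∈ S, s ∉ B ∧ s ≠ v := by
            rintro s ⟨⟨s', hs'⟩, -, rfl⟩
            exact hs'
          have hunion := isGenKIndep_union hvB hBind hclB hSB hSind
          have hdisj : Disjoint S B := by
            rw [Set.disjoint_left]
            intro a haS haB
            exact (hSB a haS).1 haB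
          have hScard : S.ncard = alphaK (G.induce T) k := by
            rw [hS_def, Set.ncard_image_of_injective _ Subtype.val_injective, hTsetcard]
          have hucard : (S ∪ B).ncard = alphaK (G.induce T) k + B.ncard := by
            rw [Set.ncard_union_eq hdisj (Set.toFinite S) (Set.toFinite B), hScard]
          have halpha : alphaK (G.induce T) k + B.ncard ≤ alphaK G k := by
            rw [← hucard]
            exact ncard_le_alphaK hunion
          -- arithmetic
          have hksucc : k - 1 + 1 = k := Nat.sub_add_cancel (by omega)
          have hmul : k * B.ncard = (k - 1) * B.ncard + B.ncard := by
            conv_lhs => rw [← hksucc]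
            rw [Nat.succ_mul]
          have hfact : Nat.card V = Nat.card ↥T + B.ncard + 1 := by
            rw [hTcard]; omega
          have hdist : (k - 1) * (Nat.card ↥T + B.ncard + 1) =
              (k - 1) * Nat.card ↥T + ((k - 1) * B.ncard + (k - 1)) := by ring
          have hstep : (k - 1) * Nat.card V ≤ (k - 1) * Nat.card ↥T + k * B.ncard := by
            rw [hfact, hdist]
            omega
          have hmulk : k * (alphaK (G.induce T) k + B.ncard) ≤ k * alphaK G k :=
            Nat.mul_le_mul_left _ halpha
          have hexp : k * (alphaK (G.induce T) k + B.ncard) =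
              k * alphaK (G.induce T) k + k * B.ncard := by ring
          omega
      exact ⟨le_trans (Nat.mul_le_mul_left _ (Nat.sub_le _ _)) hii, fun _ => hii⟩

end LowerBound


/-- If `G` is `k`-good (i.e. `α_k(G) = ((k-1)/k)(n - ω(G))`) and `x` lies on a cycle
of `G`, then `α_k(G - x) = α_k(G)`, `ω(G - x) = ω(G) - 1`, and `G - x` is `k`-good. -/
theorem kGood_deleteVertex {V : Type*} [Fintype V] (G : SimpleGraph V) (k : ℕ)
    (hk : 2 ≤ k)
    (hgood : (alphaK G k : ℚ) = ((k : ℚ) - 1) / k * ((Nat.card V : ℚ) - cycleDim G))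
    (x : V) (hx : OnCycle G x) :
    alphaK (G.induce {y : V | y ≠ x}) k = alphaK G k ∧
    cycleDim (G.induce {y : V | y ≠ x}) = cycleDim G - 1 ∧
    (alphaK (G.induce {y : V | y ≠ x}) k : ℚ) =
      ((k : ℚ) - 1) / k * ((Nat.card {y : V // y ≠ x} : ℚ) -
        cycleDim (G.induce {y : V | y ≠ x})) := by
  classical
  haveI : Fintype ↥({y : V | y ≠ x}) := Fintype.ofFinite _
  -- cardinality of the vertex-deleted set
  have hcompl : ({y : V | y ≠ x} : Set V) = ({x} : Set V)ᶜ := by ext y; simp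
  have h2 := Set.ncard_add_ncard_compl ({x} : Set V)
  rw [Set.ncard_singleton] at h2
  have h3 : (Set.univ : Set V).ncard = Nat.card V := Set.ncard_univ V
  have hn' : Nat.card ↥({y : V | y ≠ x}) = Nat.card V - 1 := by
    rw [Nat.card_coe_set_eq, hcompl]; omega
  have hV1 : 1 ≤ Nat.card V := by
    have hne : Nonempty V := ⟨x⟩
    exact Nat.one_le_iff_ne_zero.mpr (Nat.card_ne_zero.mpr ⟨hne, inferInstance⟩)
  -- counting facts
  have hd := edge_comp_drop G x hx
  have hL4 := card_le_edge_add_comp G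
  have hL4' := card_le_edge_add_comp (G.induce {y : V | y ≠ x})
  have hW : cycleDim (G.induce {y : V | y ≠ x}) + 1 ≤ cycleDim G := by
    simp only [cycleDim]
    omega
  have hA : alphaK (G.induce {y : V | y ≠ x}) k ≤ alphaK G k :=
    alphaK_induce_le G {y : V | y ≠ x} k
  have hlb := (lower_bound_aux k hk (Fintype.card ↥({y : V | y ≠ x}))
    (G.induce {y : V | y ≠ x}) le_rfl).1
  rw [hn'] at hlb
  -- from the goodness hypothesis
  have hkQ : ((k : ℚ)) ≠ 0 := by
    have : (2:ℚ) ≤ (k:ℚ) := by exact_mod_cast hk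
    linarith
  have hq : (alphaK G k : ℚ) * k = ((k : ℚ) - 1) * ((Nat.card V : ℚ) - cycleDim G) := by
    rw [hgood]; field_simp
  have hWn : cycleDim G ≤ Nat.card V := by
    by_contra hcon
    push_neg at hcon
    have hneg : ((Nat.card V : ℚ) - cycleDim G) < 0 := by
      have : (Nat.card V : ℚ) < cycleDim G := by exact_mod_cast hcon
      linarith
    have hpos : (0:ℚ) < (k:ℚ) - 1 := by
      have : (2:ℚ) ≤ (k:ℚ) := by exact_mod_cast hk
      linarith
    have hlhs : (0:ℚ) ≤ (alphaK G k : ℚ) * k := by positivity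
    nlinarith
  have hcast : ((k * alphaK G k : ℕ) : ℚ) =
      (((k - 1) * (Nat.card V - cycleDim G) : ℕ) : ℚ) := by
    push_cast [Nat.cast_sub hWn, Nat.cast_sub (show 1 ≤ k by omega)]
    linarith
  have hA_eq : k * alphaK G k = (k - 1) * (Nat.card V - cycleDim G) :=
    Nat.cast_injective hcast
  -- squeeze
  have hab : Nat.card V - cycleDim G ≤
      (Nat.card V - 1) - cycleDim (G.induce {y : V | y ≠ x}) := by omega
  have hchain : (k - 1) * ((Nat.card V - 1) - cycleDim (G.induce {y : V | y ≠ x})) ≤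
      (k - 1) * (Nat.card V - cycleDim G) := by
    calc (k - 1) * ((Nat.card V - 1) - cycleDim (G.induce {y : V | y ≠ x}))
        ≤ k * alphaK (G.induce {y : V | y ≠ x}) k := hlb
      _ ≤ k * alphaK G k := Nat.mul_le_mul_left _ hA
      _ = (k - 1) * (Nat.card V - cycleDim G) := hA_eq
  have hba : (Nat.card V - 1) - cycleDim (G.induce {y : V | y ≠ x}) ≤
      Nat.card V - cycleDim G :=
    Nat.le_of_mul_le_mul_left hchain (by omega)
  have heqab : Nat.card V - cycleDim G =
      (Nat.card V - 1) - cycleDim (G.induce {y : V | y ≠ x}) :=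
    le_antisymm hab hba
  have hsqueeze : k * alphaK (G.induce {y : V | y ≠ x}) k = k * alphaK G k := by
    have hlow : (k - 1) * (Nat.card V - cycleDim G) ≤
        k * alphaK (G.induce {y : V | y ≠ x}) k := by
      rw [heqab]; exact hlb
    have hhigh : k * alphaK (G.induce {y : V | y ≠ x}) k ≤ k * alphaK G k :=
      Nat.mul_le_mul_left _ hA
    omega
  have hAA : alphaK (G.induce {y : V | y ≠ x}) k = alphaK G k :=
    Nat.eq_of_mul_eq_mul_left (by omega) hsqueeze
  have hW1 : 1 ≤ cycleDim G := by omega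
  have hWW : cycleDim (G.induce {y : V | y ≠ x}) = cycleDim G - 1 := by omega
  refine ⟨hAA, hWW, ?_⟩
  have e1 : (alphaK (G.induce {y : V | y ≠ x}) k : ℚ) = (alphaK G k : ℚ) := by
    exact_mod_cast congrArg (fun m : ℕ => (m : ℚ)) hAA
  have e2 : (Nat.card {y : V // y ≠ x} : ℚ) = (Nat.card V : ℚ) - 1 := by
    have hn'' : Nat.card {y : V // y ≠ x} = Nat.card V - 1 := hn'
    rw [hn'', Nat.cast_sub hV1, Nat.cast_one]
  have e3 : (cycleDim (G.induce {y : V | y ≠ x}) : ℚ) = (cycleDim G : ℚ) - 1 := by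
    rw [hWW, Nat.cast_sub hW1, Nat.cast_one]
  rw [e1, e2, e3, hgood]
  ring
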